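/- Let n ≥ 2, m ≥ 2, and let ρ be an n-tuple of transpositions of the symmetric group S_m. Then: (i) N(ρ) is contained in the stabilizer Aut(ρ); (ii) N(ρ) is a normal subgroup of Aut(ρ); and (iii) for every β ∈ B_n one has N(ρ · β) = β^{-1} N(ρ) β. -/

import Mathlib

open Equiv MulOpposite

namespace ApostolakisMoves

variable {G : Type*} [Group G]

/-- The `i`-th Hurwitz move on sequences of group elements. -/
def hFun (i : ℕ) (f : ℕ → G) : ℕ → G := fun j =>
  if j = i then f i * f (i + 1) * (f i)⁻¹ else if j = i + 1 then f i else f j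

/-- The inverse of the `i`-th Hurwitz move. -/
def hInv (i : ℕ) (f : ℕ → G) : ℕ → G := fun j =>
  if j = i then f (i + 1) else if j = i + 1 then (f (i + 1))⁻¹ * f i * f (i + 1) else f j

/-- The `i`-th Hurwitz move as a permutation of sequences of group elements. -/
def hGen (G : Type*) [Group G] (i : ℕ) : Equiv.Perm (ℕ → G) where
  toFun := hFun i
  invFun := hInv i
  left_inv := by
    intro f
    funext j
    have h1 : i + 1 ≠ i := by omega
    by_cases hj : j = i
    · subst hj; simp [hFun, hInv, h1]
    · by_cases hj' : j = i + 1
      · subst hj'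
        simp only [hFun, hInv, h1, if_neg, if_pos, eq_self_iff_true, if_true, if_false]
        group
      · simp [hFun, hInv, hj, hj']
  right_inv := by
    intro f
    funext j
    have h1 : i + 1 ≠ i := by omega
    by_cases hj : j = i
    · subst hj
      simp only [hFun, hInv, h1, if_neg, if_pos, eq_self_iff_true, if_true, if_false]
      group
    · by_cases hj' : j = i + 1
      · subst hj'; simp [hFun, hInv, h1]
      · simp [hFun, hInv, hj, hj']

@[simp] lemma hGen_apply (i : ℕ) (f : ℕ → G) : hGen G i f = hFun i f := rfl

lemma braid_rel (G : Type*) [Group G] (i : ℕ) :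
    hGen G i * hGen G (i + 1) * hGen G i = hGen G (i + 1) * hGen G i * hGen G (i + 1) := by
  apply Equiv.ext
  intro f
  funext k
  simp only [Equiv.Perm.mul_apply, hGen_apply, hFun]
  split_ifs <;> first | omega | group

lemma comm_rel (G : Type*) [Group G] {i j : ℕ} (h : i + 2 ≤ j) :
    hGen G i * hGen G j = hGen G j * hGen G i := by
  apply Equiv.ext
  intro f
  funext k
  simp only [Equiv.Perm.mul_apply, hGen_apply, hFun]
  split_ifs <;> first | rfl | omega

/-- The braid relations, as a set of elements of the free group on `n - 1` generators. -/
def braidRels (n : ℕ) : Set (FreeGroup (Fin (n - 1))) :=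
  {r | ∃ i j : Fin (n - 1),
    ((i : ℕ) + 1 = (j : ℕ) ∧
      r = .of i * .of j * .of i * (.of j * .of i * .of j)⁻¹) ∨
    ((i : ℕ) + 2 ≤ (j : ℕ) ∧ r = .of i * .of j * (.of j * .of i)⁻¹)}

/-- The braid group on `n` strands, presented by the generators `β_0, …, β_{n-2}` subject to
the braid relations. -/
abbrev BraidGroup (n : ℕ) := PresentedGroup (braidRels n)

/-- The standard generator `β_i` of the braid group on `n` strands (equal to `1` if `i` is
out of range). -/
def braidGen (n i : ℕ) : BraidGroup n :=
  if h : i < n - 1 then PresentedGroup.of ⟨i, h⟩ else 1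

/-- The Hurwitz (right) action of the braid group, as a homomorphism into the opposite of the
permutation group of sequences. -/
def braidActHom (n : ℕ) (G : Type*) [Group G] : BraidGroup n →* (Equiv.Perm (ℕ → G))ᵐᵒᵖ :=
  PresentedGroup.toGroup (f := fun i : Fin (n - 1) => op (hGen G (i : ℕ))) (by
    rintro r ⟨i, j, ⟨hij, rfl⟩ | ⟨hij, rfl⟩⟩
    · have key : hGen G (i : ℕ) * hGen G (j : ℕ) * hGen G (i : ℕ)
          = hGen G (j : ℕ) * hGen G (i : ℕ) * hGen G (j : ℕ) := by
        rw [← hij]; exact braid_rel G i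
      simp only [map_mul, map_inv, FreeGroup.lift_apply_of]
      rw [mul_inv_eq_one]
      simp only [← op_mul]
      exact congrArg op (by rw [← mul_assoc, ← mul_assoc, key])
    · have key : hGen G (i : ℕ) * hGen G (j : ℕ) = hGen G (j : ℕ) * hGen G (i : ℕ) :=
        comm_rel G hij
      simp only [map_mul, map_inv, FreeGroup.lift_apply_of]
      rw [mul_inv_eq_one]
      simp only [← op_mul]
      exact congrArg op key.symm)

/-- The Hurwitz right action: `ρ · β`. -/
def act {n : ℕ} {G : Type*} [Group G] (ρ : ℕ → G) (β : BraidGroup n) : ℕ → G :=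
  (braidActHom n G β).unop ρ

lemma act_one {n : ℕ} (ρ : ℕ → G) : act ρ (1 : BraidGroup n) = ρ := by
  simp [act]

lemma act_mul {n : ℕ} (ρ : ℕ → G) (a b : BraidGroup n) :
    act ρ (a * b) = act (act ρ a) b := by
  simp [act, map_mul]

/-- `Aut ρ`: the stabilizer of the sequence `ρ` under the Hurwitz action of the braid group. -/
def stab (n : ℕ) {G : Type*} [Group G] (ρ : ℕ → G) : Subgroup (BraidGroup n) where
  carrier := {β | act ρ β = ρ}
  one_mem' := act_one ρ
  mul_mem' := by
    intro a b ha hb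
    simp only [Set.mem_setOf_eq] at *
    rw [act_mul, ha, hb]
  inv_mem' := by
    intro a ha
    simp only [Set.mem_setOf_eq] at *
    have h := act_mul ρ a a⁻¹
    rw [mul_inv_cancel, act_one, ha] at h
    exact h.symm


/-- The transposition `(1 2)` of `S₄`. -/
def t12 : Equiv.Perm (Fin 4) := Equiv.swap 0 1
/-- The transposition `(1 3)` of `S₄`. -/
def t13 : Equiv.Perm (Fin 4) := Equiv.swap 0 2
/-- The transposition `(1 4)` of `S₄`. -/
def t14 : Equiv.Perm (Fin 4) := Equiv.swap 0 3
/-- The transposition `(2 3)` of `S₄`. -/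
def t23 : Equiv.Perm (Fin 4) := Equiv.swap 1 2
/-- The transposition `(1 2)` of `S₃`. -/
def s12 : Equiv.Perm (Fin 3) := Equiv.swap 0 1
/-- The transposition `(2 3)` of `S₃`. -/
def s23 : Equiv.Perm (Fin 3) := Equiv.swap 1 2

/-- The tuple `ρ_I^n` : `(1 2)` in positions `0` and `1`, `(1 4)` in the positions of `I`,
and `(2 3)` everywhere else (an `n`-tuple is encoded as a function `ℕ → S₄` whose values at
positions `≥ n` are the irrelevant constant `(2 3)`). -/
def rhoI (I : Finset ℕ) : ℕ → Equiv.Perm (Fin 4) := fun i =>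
  if i < 2 then t12 else if i ∈ I then t14 else t23

/-- The tuple `ρ̃_I^n` : `(1 2)` in positions `0` and `1`, `(2 3)` in the positions of `I`,
and `(1 4)` everywhere else. -/
def rhoTI (I : Finset ℕ) : ℕ → Equiv.Perm (Fin 4) := fun i =>
  if i < 2 then t12 else if i ∈ I then t23 else t14

/-- The tuple `ρ(n)` : `(1 2)` in positions `0` and `1` and `(2 3)` everywhere else. -/
def rho3 : ℕ → Equiv.Perm (Fin 3) := fun i => if i < 2 then s12 else s23

/-- `L(n) = Aut(ρ(n))`, the liftable braid subgroup. -/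
def Ln (n : ℕ) : Subgroup (BraidGroup n) := stab n rho3

/-- The braid `δ₄ = w⁻¹ β₄ w`, `w = β₃ β₂ β₁² β₂ β₃² β₂ β₁`. -/
def delta4 (n : ℕ) : BraidGroup n :=
  (braidGen n 3 * braidGen n 2 * (braidGen n 1) ^ 2 * braidGen n 2 * (braidGen n 3) ^ 2 *
      braidGen n 2 * braidGen n 1)⁻¹ *
    braidGen n 4 *
    (braidGen n 3 * braidGen n 2 * (braidGen n 1) ^ 2 * braidGen n 2 * (braidGen n 3) ^ 2 *
      braidGen n 2 * braidGen n 1)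

/-- The braid `δ₆ = v⁻¹ δ₄ v`, `v = β₅⁻¹ β₄⁻¹ β₃⁻¹ β₂⁻¹ β₆⁻¹ β₅⁻¹ β₄⁻¹ β₃⁻¹`. -/
def delta6 (n : ℕ) : BraidGroup n :=
  ((braidGen n 5)⁻¹ * (braidGen n 4)⁻¹ * (braidGen n 3)⁻¹ * (braidGen n 2)⁻¹ *
      (braidGen n 6)⁻¹ * (braidGen n 5)⁻¹ * (braidGen n 4)⁻¹ * (braidGen n 3)⁻¹)⁻¹ *
    delta4 n *
    ((braidGen n 5)⁻¹ * (braidGen n 4)⁻¹ * (braidGen n 3)⁻¹ * (braidGen n 2)⁻¹ *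
      (braidGen n 6)⁻¹ * (braidGen n 5)⁻¹ * (braidGen n 4)⁻¹ * (braidGen n 3)⁻¹)

/-- The generating set of the subgroup `N(ρ)` of colored-braid moves: conjugates `w β_i³ w⁻¹`
where the entries in positions `i, i+1` of `ρ · w` are distinct transpositions sharing exactly
one point of their supports (move `𝓜`), and conjugates `w β_i² w⁻¹` where those entries are
transpositions with disjoint supports (move `𝓟`). -/
def NSet (n : ℕ) {m : ℕ} (ρ : ℕ → Equiv.Perm (Fin m)) : Set (BraidGroup n) :=
  {x | ∃ w : BraidGroup n, ∃ i : ℕ, i < n - 1 ∧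
    ((x = w * (braidGen n i) ^ 3 * w⁻¹ ∧
        (act ρ w i).IsSwap ∧ (act ρ w (i + 1)).IsSwap ∧
        ((act ρ w i).support ∩ (act ρ w (i + 1)).support).card = 1) ∨
      (x = w * (braidGen n i) ^ 2 * w⁻¹ ∧
        (act ρ w i).IsSwap ∧ (act ρ w (i + 1)).IsSwap ∧
        Disjoint (act ρ w i).support (act ρ w (i + 1)).support))}

/-- The subgroup `N(ρ)` generated by the colored-braid moves `𝓜` and `𝓟`. -/
def N (n : ℕ) {m : ℕ} (ρ : ℕ → Equiv.Perm (Fin m)) : Subgroup (BraidGroup n) :=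
  Subgroup.closure (NSet n ρ)

/-- The ordered product `β_a β_{a+1} ⋯ β_b` of braid generators. -/
def genProd (n a b : ℕ) : BraidGroup n :=
  ((List.range' a (b + 1 - a)).map (braidGen n)).prod


lemma swap_braid_aux {α : Type*} [DecidableEq α] {x c q : α}
    (h1 : x ≠ c) (h2 : c ≠ q) (h3 : x ≠ q) :
    Equiv.swap x c * Equiv.swap c q * Equiv.swap x c
      = Equiv.swap c q * Equiv.swap x c * Equiv.swap c q := by
  have l1 : Equiv.swap x c * Equiv.swap c q * Equiv.swap x c
      = Equiv.swap ((Equiv.swap x c) c) ((Equiv.swap x c) q) := by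
    rw [Equiv.swap_apply_apply, Equiv.swap_inv]
  have l2 : Equiv.swap c q * Equiv.swap x c * Equiv.swap c q
      = Equiv.swap ((Equiv.swap c q) x) ((Equiv.swap c q) c) := by
    rw [Equiv.swap_apply_apply, Equiv.swap_inv]
  have e1 : (Equiv.swap x c) c = x := Equiv.swap_apply_right x c
  have e2 : (Equiv.swap x c) q = q := Equiv.swap_apply_of_ne_of_ne h3.symm (Ne.symm h2)
  have e3 : (Equiv.swap c q) x = x := Equiv.swap_apply_of_ne_of_ne h1 h3
  have e4 : (Equiv.swap c q) c = q := Equiv.swap_apply_left c q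
  rw [l1, l2, e1, e2, e3, e4]

lemma swap_braid {m : ℕ} {a b : Equiv.Perm (Fin m)} (ha : a.IsSwap) (hb : b.IsSwap)
    (h : (a.support ∩ b.support).card = 1) : a * b * a = b * a * b := by
  obtain ⟨x, y, hxy, rfl⟩ := ha
  obtain ⟨p, q, hpq, rfl⟩ := hb
  rw [Equiv.Perm.support_swap hxy, Equiv.Perm.support_swap hpq] at h
  obtain ⟨c, hc⟩ := Finset.card_eq_one.mp h
  have hcx : c ∈ ({x, y} : Finset (Fin m)) ∧ c ∈ ({p, q} : Finset (Fin m)) := by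
    have : c ∈ ({x, y} : Finset (Fin m)) ∩ {p, q} := hc ▸ Finset.mem_singleton_self c
    exact Finset.mem_inter.mp this
  have mem : ∀ z : Fin m, z ∈ ({x, y} : Finset (Fin m)) → z ∈ ({p, q} : Finset (Fin m)) → z = c := by
    intro z hz1 hz2
    have : z ∈ ({x, y} : Finset (Fin m)) ∩ {p, q} := Finset.mem_inter.mpr ⟨hz1, hz2⟩
    rw [hc] at this; exact Finset.mem_singleton.mp this
  simp only [Finset.mem_insert, Finset.mem_singleton] at hcx mem
  obtain ⟨h1, h2⟩ := hcx
  rcases h1 with rfl | rfl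
  · -- c = x
    rcases h2 with rfl | rfl
    · -- x = p : a = swap c y = swap y c, b = swap c q
      have hyq : y ≠ q := fun e => hxy (by subst e; exact (mem y (Or.inr rfl) (Or.inr rfl)).symm)
      rw [Equiv.swap_comm c y]
      exact swap_braid_aux (Ne.symm hxy) hpq hyq
    · -- x = q : a = swap c y = swap y c, b = swap p c = swap c p
      have hyp : y ≠ p := fun e => hxy (by subst e; exact (mem y (Or.inr rfl) (Or.inl rfl)).symm)
      rw [Equiv.swap_comm c y, Equiv.swap_comm p c]
      exact swap_braid_aux (Ne.symm hxy) (Ne.symm hpq) hyp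
  · -- c = y
    rcases h2 with rfl | rfl
    · -- y = p : a = swap x c, b = swap c q
      have hxq : x ≠ q := fun e => hxy (mem x (Or.inl rfl) (by right; exact e))
      exact swap_braid_aux hxy hpq hxq
    · -- y = q : a = swap x c, b = swap p c = swap c p
      have hxp : x ≠ p := fun e => hxy (mem x (Or.inl rfl) (by left; exact e))
      rw [Equiv.swap_comm p c]
      exact swap_braid_aux hxy (Ne.symm hpq) hxp

lemma act_gen {n : ℕ} {G : Type*} [Group G] (ρ : ℕ → G) {i : ℕ} (h : i < n - 1) :
    act ρ (braidGen n i) = hFun i ρ := by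
  simp only [act, braidGen, dif_pos h, braidActHom, PresentedGroup.toGroup.of]
  rfl

lemma hFun_at_i {G : Type*} [Group G] (f : ℕ → G) (i : ℕ) :
    hFun i f i = f i * f (i + 1) * (f i)⁻¹ := if_pos rfl

lemma hFun_at_i1 {G : Type*} [Group G] (f : ℕ → G) (i : ℕ) :
    hFun i f (i + 1) = f i :=
  (if_neg (by omega : i + 1 ≠ i)).trans (if_pos rfl)

lemma hFun_at_other {G : Type*} [Group G] (f : ℕ → G) (i j : ℕ)
    (h1 : j ≠ i) (h2 : j ≠ i + 1) : hFun i f j = f j :=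
  (if_neg h1).trans (if_neg h2)

lemma hFun_cube {G : Type*} [Group G] (f : ℕ → G) (i : ℕ)
    (h : f i * f (i + 1) * f i = f (i + 1) * f i * f (i + 1)) :
    hFun i (hFun i (hFun i f)) = f := by
  set a := f i with ha
  set b := f (i + 1) with hb
  have key1 : a * b * a⁻¹ * a * (a * b * a⁻¹)⁻¹ = b := by
    calc a * b * a⁻¹ * a * (a * b * a⁻¹)⁻¹ = (a * b * a) * (b⁻¹ * a⁻¹) := by group
      _ = (b * a * b) * (b⁻¹ * a⁻¹) := by rw [h]
      _ = b := by group
  have key2 : b * (a * b * a⁻¹) * b⁻¹ = a := by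
    calc b * (a * b * a⁻¹) * b⁻¹ = (b * a * b) * (a⁻¹ * b⁻¹) := by group
      _ = (a * b * a) * (a⁻¹ * b⁻¹) := by rw [← h]
      _ = a := by group
  have h1i : hFun i f i = a * b * a⁻¹ := hFun_at_i f i
  have h1i1 : hFun i f (i + 1) = a := hFun_at_i1 f i
  have h2i : hFun i (hFun i f) i = b := by
    rw [hFun_at_i (hFun i f) i, h1i, h1i1]; exact key1
  have h2i1 : hFun i (hFun i f) (i + 1) = a * b * a⁻¹ := by
    rw [hFun_at_i1 (hFun i f) i, h1i]
  funext j
  rcases eq_or_ne j i with rfl | hj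
  · rw [hFun_at_i _ j, h2i, h2i1]; exact key2
  · rcases eq_or_ne j (i + 1) with rfl | hj'
    · rw [hFun_at_i1 _ i, h2i]
    · rw [hFun_at_other _ i j hj hj', hFun_at_other _ i j hj hj',
        hFun_at_other _ i j hj hj']

lemma hFun_sq {G : Type*} [Group G] (f : ℕ → G) (i : ℕ)
    (h : f i * f (i + 1) = f (i + 1) * f i) :
    hFun i (hFun i f) = f := by
  set a := f i with ha
  set b := f (i + 1) with hb
  have key1 : a * b * a⁻¹ = b := by
    calc a * b * a⁻¹ = (a * b) * a⁻¹ := by group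
      _ = (b * a) * a⁻¹ := by rw [h]
      _ = b := by group
  have key2 : b * a * b⁻¹ = a := by
    calc b * a * b⁻¹ = (b * a) * b⁻¹ := by group
      _ = (a * b) * b⁻¹ := by rw [← h]
      _ = a := by group
  have h1i : hFun i f i = b := by rw [hFun_at_i f i]; exact key1
  have h1i1 : hFun i f (i + 1) = a := hFun_at_i1 f i
  funext j
  rcases eq_or_ne j i with rfl | hj
  · rw [hFun_at_i _ j, h1i, h1i1]; exact key2
  · rcases eq_or_ne j (i + 1) with rfl | hj'
    · rw [hFun_at_i1 _ i, h1i]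
    · rw [hFun_at_other _ i j hj hj', hFun_at_other _ i j hj hj']

lemma NSet_stab {n m : ℕ} (ρ : ℕ → Equiv.Perm (Fin m)) {x : BraidGroup n}
    (hx : x ∈ NSet n ρ) : act ρ x = ρ := by
  obtain ⟨w, i, hi, hcase⟩ := hx
  have conj_eq : ∀ g : BraidGroup n, act (act ρ w) g = act ρ w →
      act ρ (w * g * w⁻¹) = ρ := by
    intro g hg
    rw [act_mul, act_mul, hg, ← act_mul, mul_inv_cancel, act_one]
  rcases hcase with ⟨rfl, ha, hb, hcard⟩ | ⟨rfl, ha, hb, hdisj⟩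
  · apply conj_eq
    have hbraid := swap_braid ha hb hcard
    rw [pow_succ, pow_two, act_mul, act_mul, act_gen (act ρ w) hi,
      act_gen _ hi, act_gen _ hi]
    exact hFun_cube _ _ hbraid
  · apply conj_eq
    have hcomm : act ρ w i * act ρ w (i + 1) = act ρ w (i + 1) * act ρ w i := by
      have := Equiv.Perm.disjoint_iff_disjoint_support.mpr hdisj
      exact this.commute.eq
    rw [pow_two, act_mul, act_gen (act ρ w) hi, act_gen _ hi]
    exact hFun_sq _ _ hcomm

lemma NSet_conj {n m : ℕ} (ρ : ℕ → Equiv.Perm (Fin m)) (β : BraidGroup n) :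
    NSet n (act ρ β) = (MulAut.conj β⁻¹).toMonoidHom '' NSet n ρ := by
  ext x
  constructor
  · rintro ⟨w, i, hi, hcase⟩
    have hact : act ρ (β * w) = act (act ρ β) w := (act_mul ρ β w)
    rcases hcase with ⟨rfl, ha, hb, hcard⟩ | ⟨rfl, ha, hb, hdisj⟩
    · refine ⟨(β * w) * (braidGen n i) ^ 3 * (β * w)⁻¹, ⟨β * w, i, hi, Or.inl ⟨rfl, ?_, ?_, ?_⟩⟩, ?_⟩
      · rw [hact]; exact ha
      · rw [hact]; exact hb
      · rw [hact]; exact hcard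
      · simp only [MulEquiv.toMonoidHom_eq_coe, MonoidHom.coe_coe, MulAut.conj_apply]
        group
    · refine ⟨(β * w) * (braidGen n i) ^ 2 * (β * w)⁻¹, ⟨β * w, i, hi, Or.inr ⟨rfl, ?_, ?_, ?_⟩⟩, ?_⟩
      · rw [hact]; exact ha
      · rw [hact]; exact hb
      · rw [hact]; exact hdisj
      · simp only [MulEquiv.toMonoidHom_eq_coe, MonoidHom.coe_coe, MulAut.conj_apply]
        group
  · rintro ⟨y, ⟨w, i, hi, hcase⟩, rfl⟩
    have hact : act (act ρ β) (β⁻¹ * w) = act ρ w := by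
      rw [← act_mul, mul_inv_cancel_left]
    simp only [MulEquiv.toMonoidHom_eq_coe, MonoidHom.coe_coe, MulAut.conj_apply]
    rcases hcase with ⟨rfl, ha, hb, hcard⟩ | ⟨rfl, ha, hb, hdisj⟩
    · refine ⟨β⁻¹ * w, i, hi, Or.inl ⟨by group, ?_, ?_, ?_⟩⟩
      · rw [hact]; exact ha
      · rw [hact]; exact hb
      · rw [hact]; exact hcard
    · refine ⟨β⁻¹ * w, i, hi, Or.inr ⟨by group, ?_, ?_, ?_⟩⟩
      · rw [hact]; exact ha
      · rw [hact]; exact hb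
      · rw [hact]; exact hdisj


/-- For any `n`-tuple `ρ` of transpositions of `S_m`: `N(ρ)` is contained
in `Aut(ρ)`, it is normal there, and it is natural: `N(ρ · β) = β⁻¹ N(ρ) β` for all `β`. -/
theorem N_le_normal_natural (n m : ℕ) (hn : 2 ≤ n) (hm : 2 ≤ m)
    (ρ : ℕ → Equiv.Perm (Fin m)) (hρ : ∀ i < n, (ρ i).IsSwap) :
    N n ρ ≤ stab n ρ ∧
    ((N n ρ).subgroupOf (stab n ρ)).Normal ∧
    (∀ β : BraidGroup n, N n (act ρ β) = (N n ρ).map (MulAut.conj β⁻¹).toMonoidHom) := by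
  have hnat : ∀ β : BraidGroup n, N n (act ρ β) = (N n ρ).map (MulAut.conj β⁻¹).toMonoidHom := by
    intro β
    rw [N, N, NSet_conj, ← MonoidHom.map_closure]
  have hle : N n ρ ≤ stab n ρ := by
    rw [N]
    apply (Subgroup.closure_le _).mpr
    intro x hx
    exact NSet_stab ρ hx
  refine ⟨hle, ⟨?_⟩, hnat⟩
  intro x hx g
  simp only [Subgroup.mem_subgroupOf] at hx ⊢
  have hg : act ρ ((g : BraidGroup n)⁻¹) = ρ := (stab n ρ).inv_mem g.2
  have := hnat ((g : BraidGroup n)⁻¹)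
  rw [hg, inv_inv] at this
  rw [this]
  exact ⟨x, hx, rfl⟩

end ApostolakisMoves
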